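/- arXiv:1611.08047 — 7 statements merged into one kernel-verified Lean document; each statement's English description precedes it below -/
import Mathlib

section
/- If F and G are invertible linear operators on a finite-dimensional complex vector space V such that the operator R = F ⊗ G on V ⊗ V satisfies the Yang-Baxter equation (R ⊗ I)(I ⊗ R)(R ⊗ I) = (I ⊗ R)(R ⊗ I)(I ⊗ R), then there exist nonzero scalars x, t ∈ ℂ with F = x·I and G = t·I, hence R is a scalar multiple of the identity. -/
open Matrix Kronecker

private lemma exists_entry_ne_zero {n : ℕ} (hn : 0 < n) (X : Matrix (Fin n) (Fin n) ℂ)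
    (hX : IsUnit X) : ∃ i j, X i j ≠ 0 := by
  by_contra h
  push_neg at h
  have hX0 : X = 0 := by ext i j; exact h i j
  rw [hX0] at hX
  haveI : Nonempty (Fin n) := ⟨⟨0, hn⟩⟩
  exact not_isUnit_zero hX

private lemma sq_eq_smul {n : ℕ} (hn : 0 < n) (X : Matrix (Fin n) (Fin n) ℂ)
    (hX : IsUnit X) (s : ℂ) (h : X * X = s • X) :
    s ≠ 0 ∧ X = s • (1 : Matrix (Fin n) (Fin n) ℂ) := by
  haveI : Nonempty (Fin n) := ⟨⟨0, hn⟩⟩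
  have hd : IsUnit X.det := (Matrix.isUnit_iff_isUnit_det X).mp hX
  have hs : s ≠ 0 := by
    intro hs0
    rw [hs0, zero_smul] at h
    have : IsUnit (0 : Matrix (Fin n) (Fin n) ℂ) := h ▸ hX.mul hX
    exact not_isUnit_zero this
  refine ⟨hs, ?_⟩
  calc X = X * X * X⁻¹ := by
            rw [Matrix.mul_assoc, Matrix.mul_nonsing_inv X hd, Matrix.mul_one]
    _ = (s • X) * X⁻¹ := by rw [h]
    _ = s • (X * X⁻¹) := by rw [Matrix.smul_mul]
    _ = s • 1 := by rw [Matrix.mul_nonsing_inv X hd]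

/-- If R = F ⊗ G satisfies the Yang-Baxter (braid) equation on V ⊗ V ⊗ V with
F, G invertible, then F and G are nonzero scalar multiples of the identity. -/
theorem product_yang_baxter_implies_scalar (n : ℕ)
    (F G : Matrix (Fin n) (Fin n) ℂ) (hF : IsUnit F) (hG : IsUnit G)
    (R : Matrix (Fin n × Fin n) (Fin n × Fin n) ℂ) (hR : R = F ⊗ₖ G)
    (R12 R23 : Matrix (Fin n × Fin n × Fin n) (Fin n × Fin n × Fin n) ℂ)
    (hR12 : ∀ p q, R12 p q = R (p.1, p.2.1) (q.1, q.2.1) * (if p.2.2 = q.2.2 then 1 else 0))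
    (hR23 : ∀ p q, R23 p q = (if p.1 = q.1 then 1 else 0) * R p.2 q.2)
    (hYB : R12 * R23 * R12 = R23 * R12 * R23) :
    ∃ x t : ℂ, x ≠ 0 ∧ t ≠ 0 ∧ F = x • (1 : Matrix (Fin n) (Fin n) ℂ) ∧
      G = t • (1 : Matrix (Fin n) (Fin n) ℂ) := by
  rcases Nat.eq_zero_or_pos n with hn | hn
  · subst hn
    refine ⟨1, 1, one_ne_zero, one_ne_zero, ?_, ?_⟩ <;>
      · ext i j; exact absurd i.2 (by omega)
  haveI : Nonempty (Fin n) := ⟨⟨0, hn⟩⟩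
  -- reassociation equivalence
  set e : (Fin n × Fin n × Fin n) ≃ ((Fin n × Fin n) × Fin n) :=
    (Equiv.prodAssoc (Fin n) (Fin n) (Fin n)).symm with he
  set A1 : Matrix ((Fin n × Fin n) × Fin n) ((Fin n × Fin n) × Fin n) ℂ :=
    (F ⊗ₖ G) ⊗ₖ (1 : Matrix (Fin n) (Fin n) ℂ) with hA1
  set A2 : Matrix ((Fin n × Fin n) × Fin n) ((Fin n × Fin n) × Fin n) ℂ :=
    ((1 : Matrix (Fin n) (Fin n) ℂ) ⊗ₖ F) ⊗ₖ G with hA2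
  have h12 : R12 = A1.submatrix e e := by
    ext ⟨i, k, a⟩ ⟨j, l, b⟩
    simp [hR12, hR, hA1, he, Matrix.one_apply, Equiv.prodAssoc, mul_assoc]
  have h23 : R23 = A2.submatrix e e := by
    ext ⟨i, k, a⟩ ⟨j, l, b⟩
    simp [hR23, hR, hA2, he, Matrix.one_apply, Equiv.prodAssoc, mul_assoc]
  rw [h12, h23, Matrix.submatrix_mul_equiv, Matrix.submatrix_mul_equiv,
    Matrix.submatrix_mul_equiv, Matrix.submatrix_mul_equiv] at hYB
  have hYB' : A1 * A2 * A1 = A2 * A1 * A2 := by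
    have := congrArg (fun M => M.submatrix e.symm e.symm) hYB
    simpa [Matrix.submatrix_submatrix] using this
  rw [hA1, hA2] at hYB'
  simp only [← Matrix.mul_kronecker_mul, Matrix.mul_one, Matrix.one_mul] at hYB'
  -- hYB' : ((F*F) ⊗ₖ (G*F*G)) ⊗ₖ G = (F ⊗ₖ (F*G*F)) ⊗ₖ (G*G)
  have key : ∀ i j k l a b,
      (F * F) i j * ((G * F * G) k l * G a b) =
      F i j * ((F * G * F) k l * (G * G) a b) := by
    intro i j k l a b
    have := congrFun (congrFun hYB' ((i, k), a)) ((j, l), b)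
    simpa [Matrix.kroneckerMap_apply, mul_assoc] using this
  obtain ⟨k₀, l₀, hk₀⟩ := exists_entry_ne_zero hn (G * F * G) ((hG.mul hF).mul hG)
  obtain ⟨a₀, b₀, ha₀⟩ := exists_entry_ne_zero hn G hG
  have hFF : F * F = (((F * G * F) k₀ l₀ * (G * G) a₀ b₀) /
      ((G * F * G) k₀ l₀ * G a₀ b₀)) • F := by
    ext i j
    have h := key i j k₀ l₀ a₀ b₀
    have hne : (G * F * G) k₀ l₀ * G a₀ b₀ ≠ 0 := mul_ne_zero hk₀ ha₀
    rw [Matrix.smul_apply, smul_eq_mul, div_mul_eq_mul_div, eq_div_iff hne]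
    linear_combination h
  obtain ⟨hx, hFscal⟩ := sq_eq_smul hn F hF _ hFF
  obtain ⟨i₀, j₀, hi₀⟩ := exists_entry_ne_zero hn F hF
  obtain ⟨k₁, l₁, hk₁⟩ := exists_entry_ne_zero hn (F * G * F) ((hF.mul hG).mul hF)
  have hGG : G * G = (((F * F) i₀ j₀ * (G * F * G) k₁ l₁) /
      (F i₀ j₀ * (F * G * F) k₁ l₁)) • G := by
    ext a b
    have h := key i₀ j₀ k₁ l₁ a b
    have hne : F i₀ j₀ * (F * G * F) k₁ l₁ ≠ 0 := mul_ne_zero hi₀ hk₁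
    rw [Matrix.smul_apply, smul_eq_mul, div_mul_eq_mul_div, eq_div_iff hne]
    linear_combination -h
  obtain ⟨ht, hGscal⟩ := sq_eq_smul hn G hG _ hGG
  exact ⟨_, _, hx, ht, hFscal, hGscal⟩
end

section
/- Let S : V ⊗ V → V ⊗ V be the swap operator S(x ⊗ y) = y ⊗ x, and let F, G be invertible operators on V. If R = S ∘ (F ⊗ G) satisfies the Yang-Baxter equation (R ⊗ I)(I ⊗ R)(R ⊗ I) = (I ⊗ R)(R ⊗ I)(I ⊗ R) on V ⊗ V ⊗ V, then FG = GF. -/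
open Matrix Kronecker

/-- If R = S ∘ (F ⊗ G) (swap composed with a product operator) satisfies the
Yang-Baxter equation, then FG = GF. -/
theorem swap_yang_baxter_implies_commute (n : ℕ)
    (F G : Matrix (Fin n) (Fin n) ℂ) (hF : IsUnit F) (hG : IsUnit G)
    (S : Matrix (Fin n × Fin n) (Fin n × Fin n) ℂ)
    (hS : ∀ p q, S p q = if p.1 = q.2 ∧ p.2 = q.1 then 1 else 0)
    (R : Matrix (Fin n × Fin n) (Fin n × Fin n) ℂ) (hR : R = S * (F ⊗ₖ G))
    (R12 R23 : Matrix (Fin n × Fin n × Fin n) (Fin n × Fin n × Fin n) ℂ)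
    (hR12 : ∀ p q, R12 p q = R (p.1, p.2.1) (q.1, q.2.1) * (if p.2.2 = q.2.2 then 1 else 0))
    (hR23 : ∀ p q, R23 p q = (if p.1 = q.1 then 1 else 0) * R p.2 q.2)
    (hYB : R12 * R23 * R12 = R23 * R12 * R23) :
    F * G = G * F := by
  have hRe : ∀ a b c d : Fin n, R (a, b) (c, d) = F b c * G a d := by
    intro a b c d
    rw [hR, Matrix.mul_apply, Fintype.sum_prod_type]
    simp [hS, Matrix.kroneckerMap_apply, ite_and, Finset.sum_ite_eq, Finset.sum_ite_eq']
  have hA : ∀ a b c d e f : Fin n,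
      (R12 * R23) (a, b, c) (d, e, f) = F b d * F c e * (G * G) a f := by
    intro a b c d e f
    rw [Matrix.mul_apply]
    simp only [Fintype.sum_prod_type, hR12, hR23, hRe, mul_ite, ite_mul, mul_zero, zero_mul,
      mul_one, one_mul, Finset.sum_ite_irrel, Finset.sum_const_zero,
      Finset.sum_ite_eq, Finset.sum_ite_eq', Finset.mem_univ, if_true]
    rw [Matrix.mul_apply, Finset.mul_sum]
    exact Finset.sum_congr rfl fun y _ => by ring
  have hB : ∀ a b c d e f : Fin n,
      (R23 * R12) (a, b, c) (d, e, f) = (F * F) c d * G a e * G b f := by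
    intro a b c d e f
    rw [Matrix.mul_apply]
    simp only [Fintype.sum_prod_type, hR12, hR23, hRe, mul_ite, ite_mul, mul_zero, zero_mul,
      mul_one, one_mul, Finset.sum_ite_irrel, Finset.sum_const_zero,
      Finset.sum_ite_eq, Finset.sum_ite_eq', Finset.mem_univ, if_true]
    rw [Matrix.mul_apply, Finset.sum_mul, Finset.sum_mul]
    exact Finset.sum_congr rfl fun y _ => by ring
  have hL : ∀ a b c g h k : Fin n,
      (R12 * R23 * R12) (a, b, c) (g, h, k)
        = (F * G) b h * ((F * F) c g * (G * G) a k) := by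
    intro a b c g h k
    rw [Matrix.mul_apply]
    simp only [Fintype.sum_prod_type, hA, hR12, hRe, mul_ite, ite_mul, mul_zero, zero_mul,
      mul_one, one_mul, Finset.sum_ite_irrel, Finset.sum_const_zero,
      Finset.sum_ite_eq, Finset.sum_ite_eq', Finset.mem_univ, if_true]
    conv_rhs => rw [Matrix.mul_apply (M := F) (N := G), Matrix.mul_apply (M := F) (N := F)]
    simp only [Finset.sum_mul, Finset.mul_sum]
    rw [Finset.sum_comm]
    exact Finset.sum_congr rfl fun d _ => Finset.sum_congr rfl fun e _ => by ring
  have hRt : ∀ a b c g h k : Fin n,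
      (R23 * R12 * R23) (a, b, c) (g, h, k)
        = (G * F) b h * ((F * F) c g * (G * G) a k) := by
    intro a b c g h k
    rw [Matrix.mul_apply]
    simp only [Fintype.sum_prod_type, hB, hR23, hRe, mul_ite, ite_mul, mul_zero, zero_mul,
      mul_one, one_mul, Finset.sum_ite_irrel, Finset.sum_const_zero,
      Finset.sum_ite_eq, Finset.sum_ite_eq', Finset.mem_univ, if_true]
    conv_rhs => rw [Matrix.mul_apply (M := G) (N := F), Matrix.mul_apply (M := G) (N := G)]
    simp only [Finset.sum_mul, Finset.mul_sum]
    exact Finset.sum_congr rfl fun f _ => Finset.sum_congr rfl fun e _ => by ring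
  have key : ∀ a b c g h k : Fin n,
      (F * G) b h * ((F * F) c g * (G * G) a k)
        = (G * F) b h * ((F * F) c g * (G * G) a k) := by
    intro a b c g h k
    rw [← hL a b c g h k, ← hRt a b c g h k, hYB]
  rcases Nat.eq_zero_or_pos n with hn | hn
  · subst hn; exact Subsingleton.elim _ _
  · have hne : Nonempty (Fin n) := ⟨⟨0, hn⟩⟩
    have hex : ∀ (M : Matrix (Fin n) (Fin n) ℂ), IsUnit M → ∃ i j, M i j ≠ 0 := by
      intro M hM
      by_contra hcon
      push_neg at hcon
      have hM0 : M = 0 := by ext i j; exact hcon i j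
      rw [hM0, isUnit_zero_iff] at hM
      have i := Classical.arbitrary (Fin n)
      have h01 := Matrix.ext_iff.mpr hM i i
      rw [Matrix.one_apply_eq, Matrix.zero_apply] at h01
      exact zero_ne_one h01
    obtain ⟨c, g, hcg⟩ := hex _ (hF.mul hF)
    obtain ⟨a, k, hak⟩ := hex _ (hG.mul hG)
    ext b h
    exact mul_right_cancel₀ (mul_ne_zero hcg hak) (key a b c g h k)
end

section
/- The 4×4 matrix R with rows [A⁻¹,0,0,0], [0, A⁻¹ − A³, A, 0], [0, A, 0, 0], [0,0,0, A⁻¹] (A ∈ ℂ, A ≠ 0) is unitary if and only if A⁴ = 1 and |A| = 1; in that case A = ±1 or A = ±i. -/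
open Matrix

/-- The bracket-polynomial R-matrix is unitary iff A⁴ = 1 and |A| = 1,
in which case A = ±1 or A = ±i. -/
theorem bracket_R_unitary_iff (A : ℂ) (hA : A ≠ 0) :
    let R : Matrix (Fin 4) (Fin 4) ℂ :=
      !![A⁻¹, 0, 0, 0;
         0, A⁻¹ - A ^ 3, A, 0;
         0, A, 0, 0;
         0, 0, 0, A⁻¹]
    (R * Rᴴ = 1 ↔ (A ^ 4 = 1 ∧ ‖A‖ = 1)) ∧
    (R * Rᴴ = 1 → A = 1 ∨ A = -1 ∨ A = Complex.I ∨ A = -Complex.I) := by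
  intro R
  have key : R * Rᴴ = 1 ↔ (A ^ 4 = 1 ∧ ‖A‖ = 1) := by
    constructor
    · intro h
      have h00 := congrFun (congrFun h 0) 0
      have h12 := congrFun (congrFun h 1) 2
      simp [R, Matrix.mul_apply, Fin.sum_univ_four, Matrix.conjTranspose_apply,
        Matrix.one_apply] at h00 h12
      have h3 : A⁻¹ = A ^ 3 := by
        rcases h12 with h' | h'
        · exact sub_eq_zero.mp h'
        · exact absurd h' hA
      have h4 : A ^ 4 = 1 := by
        field_simp at h3
        linear_combination -h3
      refine ⟨h4, ?_⟩
      have habs := congrArg (‖·‖) h00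
      simp [_root_.map_mul, map_inv₀] at habs
      have hpos : 0 < ‖A‖ := norm_pos_iff.mpr hA
      have h2 : ‖A‖ * ‖A‖ = 1 := by
        field_simp at habs
        linarith [habs]
      nlinarith
    · rintro ⟨h4, habs⟩
      have hn : A * (starRingEnd ℂ) A = 1 := by
        rw [Complex.mul_conj]
        norm_cast
        rw [Complex.normSq_eq_norm_sq, habs]
        norm_num
      have hst : (starRingEnd ℂ) A = A⁻¹ := eq_inv_of_mul_eq_one_right
        (by linear_combination hn)
      have h3 : A⁻¹ = A ^ 3 := by
        field_simp
        linear_combination -h4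
      have hst' : (starRingEnd ℂ) A = A ^ 3 := hst.trans h3
      show R * Rᴴ = 1
      simp only [R]
      rw [h3]
      ext i j
      fin_cases i <;> fin_cases j <;>
        simp [Matrix.mul_apply, Fin.sum_univ_four, Matrix.conjTranspose_apply,
          Matrix.one_apply, map_pow, hst'] <;>
        first
          | rfl
          | linear_combination h4
          | linear_combination (A ^ 8 + A ^ 4 + 1) * h4
  refine ⟨key, fun h => ?_⟩
  obtain ⟨h4, _⟩ := key.mp h
  have hfac : (A - 1) * (A + 1) * (A - Complex.I) * (A + Complex.I) = 0 := by
    linear_combination h4 + (1 - A ^ 2) * Complex.I_sq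
  rcases mul_eq_zero.mp hfac with h' | h'
  · rcases mul_eq_zero.mp h' with h'' | h''
    · rcases mul_eq_zero.mp h'' with h3 | h3
      · exact Or.inl (by linear_combination h3)
      · exact Or.inr (Or.inl (by linear_combination h3))
    · exact Or.inr (Or.inr (Or.inl (by linear_combination h'')))
  · exact Or.inr (Or.inr (Or.inr (by linear_combination h')))
end

section
/- A 4×4 complex matrix of the form R = [[a,0,0,0],[0,0,d,0],[0,c,0,0],[0,0,0,b]] (acting on ℂ² ⊗ ℂ² in the basis |00⟩,|01⟩,|10⟩,|11⟩) is entangling (i.e., maps some product state to a non-product state) if and only if ab ≠ cd. -/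
open Matrix

/-- A state on ℂ² ⊗ ℂ², written as a function on pairs of basis indices,
is a product state if it factors as u ⊗ v. -/
def IsProdState (s : Fin 2 × Fin 2 → ℂ) : Prop :=
  ∃ u v : Fin 2 → ℂ, s = fun p => u p.1 * v p.2

lemma isProdState_iff (s : Fin 2 × Fin 2 → ℂ) :
    IsProdState s ↔ s (0,0) * s (1,1) = s (0,1) * s (1,0) := by
  constructor
  · rintro ⟨u, v, rfl⟩
    ring
  · intro h
    simp only [Prod.mk_zero_zero, Prod.mk_one_one] at h
    by_cases hx : s 0 = 0
    · by_cases hy : s (0,1) = 0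
      · exact ⟨![0,1], ![s (1,0), s 1], funext fun p => by
          obtain ⟨i,j⟩ := p; fin_cases i <;> fin_cases j <;> simp [hx, hy, Prod.mk_zero_zero, Prod.mk_one_one]⟩
      · have hz : s (1,0) = 0 := by
          have h0 : s (0,1) * s (1,0) = 0 := by rw [← h, hx, zero_mul]
          rcases mul_eq_zero.mp h0 with h' | h'
          · exact absurd h' hy
          · exact h'
        exact ⟨![s (0,1), s 1], ![0,1], funext fun p => by
          obtain ⟨i,j⟩ := p; fin_cases i <;> fin_cases j <;> simp [hx, hz, Prod.mk_zero_zero, Prod.mk_one_one]⟩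
    · refine ⟨![s 0, s (1,0)], ![1, s (0,1) / s 0], funext fun p => ?_⟩
      obtain ⟨i,j⟩ := p
      fin_cases i <;> fin_cases j <;> simp [Prod.mk_zero_zero, Prod.mk_one_one] <;> field_simp <;>
        try ring_nf <;>
        linear_combination h

/-- The matrix R = diag-type [[a,0,0,0],[0,0,d,0],[0,c,0,0],[0,0,0,b]] with
a,b,c,d ≠ 0 is entangling iff ab ≠ cd. -/
theorem diag_antidiag_R_entangling_iff (a b c d : ℂ)
    (ha : a ≠ 0) (hb : b ≠ 0) (hc : c ≠ 0) (hd : d ≠ 0)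
    (R : Matrix (Fin 2 × Fin 2) (Fin 2 × Fin 2) ℂ)
    (hR : ∀ p q, R p q =
      if p = (0,0) ∧ q = (0,0) then a
      else if p = (0,1) ∧ q = (1,0) then d
      else if p = (1,0) ∧ q = (0,1) then c
      else if p = (1,1) ∧ q = (1,1) then b
      else 0) :
    (∃ s : Fin 2 × Fin 2 → ℂ, IsProdState s ∧ ¬ IsProdState (R.mulVec s)) ↔
      a * b ≠ c * d := by
  have hm : ∀ s : Fin 2 × Fin 2 → ℂ,
      R.mulVec s (0,0) = a * s (0,0) ∧ R.mulVec s (0,1) = d * s (1,0) ∧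
      R.mulVec s (1,0) = c * s (0,1) ∧ R.mulVec s (1,1) = b * s (1,1) := by
    intro s
    refine ⟨?_, ?_, ?_, ?_⟩ <;>
      simp [mulVec, dotProduct, Fintype.sum_prod_type, Fin.sum_univ_two, hR, Prod.ext_iff]
  constructor
  · rintro ⟨s, hs, hns⟩
    intro hab
    apply hns
    obtain ⟨h1, h2, h3, h4⟩ := hm s
    rw [isProdState_iff] at hs ⊢
    rw [h1, h2, h3, h4]
    linear_combination a * b * hs + s (0,1) * s (1,0) * hab
  · intro hab
    refine ⟨fun _ => 1, ⟨fun _ => 1, fun _ => 1, by funext p; simp⟩, ?_⟩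
    obtain ⟨h1, h2, h3, h4⟩ := hm (fun _ => 1)
    rw [isProdState_iff, h1, h2, h3, h4]
    simp only [mul_one]
    intro h
    exact hab (by linear_combination h)
end

section
/- Let A = e^{iθ} with θ real, and let R be the 4×4 matrix with rows [0,0,0,A], [0,A⁻¹,0,0], [0,0,A⁻¹,0], [A,0,0,0]. Applied to a product state (x|0⟩+y|1⟩)⊗(z|0⟩+w|1⟩), the result is a product state if and only if xyzw(A² − A⁻²) = 0. In particular, if sin(2θ) ≠ 0 then R is entangling. -/
open Matrix

/-- For A = e^{iθ}, the R-matrix [[0,0,0,A],[0,A⁻¹,0,0],[0,0,A⁻¹,0],[A,0,0,0]]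
applied to a product state (x|0⟩+y|1⟩)⊗(z|0⟩+w|1⟩) yields a product state iff
xyzw(A² − A⁻²) = 0; in particular if sin 2θ ≠ 0 then R is entangling. -/
theorem virtual_R_entangling (θ : ℝ) (A : ℂ) (hA : A = Complex.exp (Complex.I * θ))
    (R : Matrix (Fin 2 × Fin 2) (Fin 2 × Fin 2) ℂ)
    (hR : ∀ p q, R p q =
      if p = (0,0) ∧ q = (1,1) then A
      else if p = (1,1) ∧ q = (0,0) then A
      else if p = (0,1) ∧ q = (0,1) then A⁻¹
      else if p = (1,0) ∧ q = (1,0) then A⁻¹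
      else 0) :
    (∀ x y z w : ℂ,
      IsProdState (R.mulVec (fun p => (if p.1 = 0 then x else y) * (if p.2 = 0 then z else w)))
        ↔ x * y * z * w * (A ^ 2 - A⁻¹ ^ 2) = 0) ∧
    (Real.sin (2 * θ) ≠ 0 →
      ∃ s : Fin 2 × Fin 2 → ℂ, IsProdState s ∧ ¬ IsProdState (R.mulVec s)) := by
  have key : ∀ x y z w : ℂ,
      IsProdState (R.mulVec (fun p => (if p.1 = 0 then x else y) * (if p.2 = 0 then z else w)))
        ↔ x * y * z * w * (A ^ 2 - A⁻¹ ^ 2) = 0 := by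
    intro x y z w
    set f : Fin 2 × Fin 2 → ℂ := fun p => (if p.1 = 0 then x else y) * (if p.2 = 0 then z else w)
      with hf
    have e00 : R.mulVec f (0,0) = A * (y * w) := by
      simp [mulVec, dotProduct, Fintype.sum_prod_type, Fin.sum_univ_two, hR, hf,
        Prod.ext_iff]
    have e01 : R.mulVec f (0,1) = A⁻¹ * (x * w) := by
      simp [mulVec, dotProduct, Fintype.sum_prod_type, Fin.sum_univ_two, hR, hf,
        Prod.ext_iff]
    have e10 : R.mulVec f (1,0) = A⁻¹ * (y * z) := by
      simp [mulVec, dotProduct, Fintype.sum_prod_type, Fin.sum_univ_two, hR, hf,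
        Prod.ext_iff]
    have e11 : R.mulVec f (1,1) = A * (x * z) := by
      simp [mulVec, dotProduct, Fintype.sum_prod_type, Fin.sum_univ_two, hR, hf,
        Prod.ext_iff]
    rw [isProdState_iff, e00, e01, e10, e11]
    constructor
    · intro H; linear_combination H
    · intro H; linear_combination H
  refine ⟨key, fun hsin => ?_⟩
  refine ⟨(fun _ => 1), ⟨(fun _ => 1), (fun _ => 1), by funext p; simp⟩, ?_⟩
  have hfun : (fun p : Fin 2 × Fin 2 =>
      (if p.1 = 0 then (1:ℂ) else 1) * (if p.2 = 0 then (1:ℂ) else 1)) = fun _ => 1 := by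
    funext p; simp
  intro hcontra
  have h1 := (key 1 1 1 1).mp (by rw [hfun]; exact hcontra)
  have hD : A ^ 2 - A⁻¹ ^ 2 = 2 * Complex.I * Complex.sin (2 * θ) := by
    have h2 : A ^ 2 = Complex.exp (((2:ℂ) * θ) * Complex.I) := by
      rw [hA, ← Complex.exp_nat_mul]
      norm_num; ring_nf
    have h3 : A⁻¹ ^ 2 = Complex.exp (-(((2:ℂ) * θ) * Complex.I)) := by
      rw [hA, ← Complex.exp_neg, ← Complex.exp_nat_mul]
      norm_num; ring_nf
    rw [h2, h3, Complex.sin]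
    have : Complex.I * Complex.I = -1 := Complex.I_mul_I
    field_simp
    ring_nf
    rw [Complex.I_sq]
    ring
  have hsin' : Complex.sin (2 * θ) ≠ 0 := by
    have : ((2 * θ : ℝ) : ℂ) = 2 * (θ : ℂ) := by push_cast; ring
    rw [← this, ← Complex.ofReal_sin]
    exact_mod_cast hsin
  rw [hD] at h1
  simp only [one_mul] at h1
  have : Complex.sin (2 * θ) = 0 := by
    have h2 : (2 : ℂ) * Complex.I ≠ 0 := by simp [Complex.I_ne_zero]
    exact (mul_eq_zero.mp h1).resolve_left h2
  exact hsin' this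
end

section
/- The matrix R with rows [0,0,0,A], [0,A⁻¹,0,0], [0,0,A⁻¹,0], [A,0,0,0] satisfies the Yang-Baxter equation (R ⊗ I)(I ⊗ R)(R ⊗ I) = (I ⊗ R)(R ⊗ I)(I ⊗ R) on (ℂ²)^{⊗3}, and is unitary whenever |A| = 1. -/
open Matrix

private lemma mono_mul {n : Type*} [Fintype n] [DecidableEq n]
    (M N : Matrix n n ℂ) (σ τ : n → n) (w v : n → ℂ)
    (hM : ∀ p q, M p q = if q = σ p then w p else 0)
    (hN : ∀ p q, N p q = if q = τ p then v p else 0) :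
    ∀ p q, (M * N) p q = if q = τ (σ p) then w p * v (σ p) else 0 := by
  intro p q
  simp only [Matrix.mul_apply, hM, hN, ite_mul, zero_mul, mul_ite, mul_zero]
  rw [Finset.sum_eq_single (σ p)]
  · simp
  · intro b _ hb
    split_ifs with h1 h2 <;> simp_all
  · simp

private lemma R_entry (A : ℂ) (R : Matrix (Fin 2 × Fin 2) (Fin 2 × Fin 2) ℂ)
    (hR : ∀ p q, R p q =
      if p = (0,0) ∧ q = (1,1) then A
      else if p = (1,1) ∧ q = (0,0) then A
      else if p = (0,1) ∧ q = (0,1) then A⁻¹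
      else if p = (1,0) ∧ q = (1,0) then A⁻¹
      else 0) :
    ∀ p q : Fin 2 × Fin 2,
      R p q = if q = (1 - p.2, 1 - p.1) then (if p.1 = p.2 then A else A⁻¹) else 0 := by
  rintro ⟨a, b⟩ ⟨c, d⟩
  fin_cases a <;> fin_cases b <;> fin_cases c <;> fin_cases d <;>
    simp [hR, Prod.ext_iff]

private lemma R12_entry (A : ℂ) (R : Matrix (Fin 2 × Fin 2) (Fin 2 × Fin 2) ℂ)
    (hR' : ∀ p q : Fin 2 × Fin 2,
      R p q = if q = (1 - p.2, 1 - p.1) then (if p.1 = p.2 then A else A⁻¹) else 0)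
    (R12 : Matrix (Fin 2 × Fin 2 × Fin 2) (Fin 2 × Fin 2 × Fin 2) ℂ)
    (hR12 : ∀ p q, R12 p q = R (p.1, p.2.1) (q.1, q.2.1) * (if p.2.2 = q.2.2 then 1 else 0)) :
    ∀ p q, R12 p q =
      if q = (1 - p.2.1, 1 - p.1, p.2.2) then (if p.1 = p.2.1 then A else A⁻¹) else 0 := by
  rintro ⟨a, b, c⟩ ⟨d, e, f⟩
  rw [hR12, hR']
  rcases eq_or_ne c f with hf | hf
  · subst hf
    simp [Prod.ext_iff, and_assoc]
  · simp [Prod.ext_iff, hf, Ne.symm hf]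

private lemma R23_entry (A : ℂ) (R : Matrix (Fin 2 × Fin 2) (Fin 2 × Fin 2) ℂ)
    (hR' : ∀ p q : Fin 2 × Fin 2,
      R p q = if q = (1 - p.2, 1 - p.1) then (if p.1 = p.2 then A else A⁻¹) else 0)
    (R23 : Matrix (Fin 2 × Fin 2 × Fin 2) (Fin 2 × Fin 2 × Fin 2) ℂ)
    (hR23 : ∀ p q, R23 p q = (if p.1 = q.1 then 1 else 0) * R p.2 q.2) :
    ∀ p q, R23 p q =
      if q = (p.1, 1 - p.2.2, 1 - p.2.1) then (if p.2.1 = p.2.2 then A else A⁻¹) else 0 := by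
  rintro ⟨a, b, c⟩ ⟨d, e, f⟩
  rw [hR23, hR']
  rcases eq_or_ne a d with ha | ha
  · subst ha
    simp [Prod.ext_iff, and_assoc]
  · simp [Prod.ext_iff, ha, Ne.symm ha]

/-- The matrix [[0,0,0,A],[0,A⁻¹,0,0],[0,0,A⁻¹,0],[A,0,0,0]] satisfies the
Yang-Baxter equation, and is unitary whenever |A| = 1. -/
theorem virtual_R_yang_baxter_and_unitary (A : ℂ) (hA : A ≠ 0)
    (R : Matrix (Fin 2 × Fin 2) (Fin 2 × Fin 2) ℂ)
    (hR : ∀ p q, R p q =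
      if p = (0,0) ∧ q = (1,1) then A
      else if p = (1,1) ∧ q = (0,0) then A
      else if p = (0,1) ∧ q = (0,1) then A⁻¹
      else if p = (1,0) ∧ q = (1,0) then A⁻¹
      else 0)
    (R12 R23 : Matrix (Fin 2 × Fin 2 × Fin 2) (Fin 2 × Fin 2 × Fin 2) ℂ)
    (hR12 : ∀ p q, R12 p q = R (p.1, p.2.1) (q.1, q.2.1) * (if p.2.2 = q.2.2 then 1 else 0))
    (hR23 : ∀ p q, R23 p q = (if p.1 = q.1 then 1 else 0) * R p.2 q.2) :
    R12 * R23 * R12 = R23 * R12 * R23 ∧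
    (‖A‖ = 1 → R * Rᴴ = 1) := by
  have hR' := R_entry A R hR
  constructor
  · have e12 := R12_entry A R hR' R12 hR12
    have e23 := R23_entry A R hR' R23 hR23
    have L1 := mono_mul R12 R23 _ _ _ _ e12 e23
    have L2 := mono_mul (R12 * R23) R12 _ _ _ _ L1 e12
    have M1 := mono_mul R23 R12 _ _ _ _ e23 e12
    have M2 := mono_mul (R23 * R12) R23 _ _ _ _ M1 e23
    ext ⟨a, b, c⟩ ⟨d, e, f⟩
    rw [L2, M2]
    clear L1 L2 M1 M2 e12 e23 hR hR' hR12 hR23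
    fin_cases a <;> fin_cases b <;> fin_cases c <;>
      norm_num <;> ring
  · intro h
    have hc : (starRingEnd ℂ) A = A⁻¹ := by
      rw [Complex.inv_def]
      simp [Complex.normSq_eq_norm_sq, h]
    ext ⟨a, b⟩ ⟨c, d⟩
    fin_cases a <;> fin_cases b <;> fin_cases c <;> fin_cases d <;>
      · simp only [Matrix.mul_apply, Matrix.conjTranspose_apply, Fintype.sum_prod_type,
          Fin.sum_univ_two, hR', Prod.mk.injEq, Matrix.one_apply, apply_ite (starRingEnd ℂ), map_zero, hc]
        simp [hc, mul_inv_cancel₀ hA, inv_mul_cancel₀ hA, inv_inv]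
end

section
/- Let M = [[0, iA],[−iA⁻¹, 0]] for a nonzero complex number A, and define the 4×4 matrix R by R^{ab}_{cd} = A·M^{ab}·M_{cd} + A⁻¹·δ^a_c·δ^b_d where M^{ab} = M_{ab} are the entries of M. Then R satisfies the Yang-Baxter equation, and R·R̄ = I where R̄^{ab}_{cd} = A⁻¹·M^{ab}·M_{cd} + A·δ^a_c·δ^b_d. -/
open Matrix

def Em (M : Matrix (Fin 2) (Fin 2) ℂ) : Matrix (Fin 2 × Fin 2) (Fin 2 × Fin 2) ℂ :=
  fun p q => M p.1 p.2 * M q.1 q.2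

def E12m (M : Matrix (Fin 2) (Fin 2) ℂ) :
    Matrix (Fin 2 × Fin 2 × Fin 2) (Fin 2 × Fin 2 × Fin 2) ℂ :=
  fun p q => M p.1 p.2.1 * M q.1 q.2.1 * (if p.2.2 = q.2.2 then 1 else 0)

def E23m (M : Matrix (Fin 2) (Fin 2) ℂ) :
    Matrix (Fin 2 × Fin 2 × Fin 2) (Fin 2 × Fin 2 × Fin 2) ℂ :=
  fun p q => (if p.1 = q.1 then 1 else 0) * (M p.2.1 p.2.2 * M q.2.1 q.2.2)

lemma l1 (M : Matrix (Fin 2) (Fin 2) ℂ)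
    (h00 : M 0 0 * M 0 0 + M 0 1 * M 1 0 = 1) (h01 : M 0 0 * M 0 1 + M 0 1 * M 1 1 = 0)
    (h10 : M 1 0 * M 0 0 + M 1 1 * M 1 0 = 0) (h11 : M 1 0 * M 0 1 + M 1 1 * M 1 1 = 1) :
    E12m M * E23m M = Matrix.of fun p q => M p.1 p.2.1 * M q.2.1 q.2.2 * (if q.1 = p.2.2 then 1 else 0) := by
  ext ⟨a, b, c⟩ ⟨d, e, f⟩
  simp only [mul_apply, Fintype.sum_prod_type, Fin.sum_univ_two, E12m, E23m]
  fin_cases c <;> fin_cases d <;> norm_num <;>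
    first
    | linear_combination (M a b * M e f) * h00
    | linear_combination (M a b * M e f) * h01
    | linear_combination (M a b * M e f) * h10
    | linear_combination (M a b * M e f) * h11

lemma l2 (M : Matrix (Fin 2) (Fin 2) ℂ)
    (h00 : M 0 0 * M 0 0 + M 0 1 * M 1 0 = 1) (h01 : M 0 0 * M 0 1 + M 0 1 * M 1 1 = 0)
    (h10 : M 1 0 * M 0 0 + M 1 1 * M 1 0 = 0) (h11 : M 1 0 * M 0 1 + M 1 1 * M 1 1 = 1) :
    E12m M * E23m M * E12m M = E12m M := by
  rw [l1 M h00 h01 h10 h11]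
  ext ⟨a, b, c⟩ ⟨d, e, f⟩
  simp only [mul_apply, Fintype.sum_prod_type, Fin.sum_univ_two, E12m]
  fin_cases c <;> fin_cases f <;> norm_num <;>
    first
    | linear_combination (M a b * M d e) * h00
    | linear_combination (M a b * M d e) * h01
    | linear_combination (M a b * M d e) * h10
    | linear_combination (M a b * M d e) * h11

lemma l1' (M : Matrix (Fin 2) (Fin 2) ℂ)
    (h00 : M 0 0 * M 0 0 + M 0 1 * M 1 0 = 1) (h01 : M 0 0 * M 0 1 + M 0 1 * M 1 1 = 0)
    (h10 : M 1 0 * M 0 0 + M 1 1 * M 1 0 = 0) (h11 : M 1 0 * M 0 1 + M 1 1 * M 1 1 = 1) :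
    E23m M * E12m M = Matrix.of fun p q => M p.2.1 p.2.2 * M q.1 q.2.1 * (if p.1 = q.2.2 then 1 else 0) := by
  ext ⟨a, b, c⟩ ⟨d, e, f⟩
  simp only [mul_apply, Fintype.sum_prod_type, Fin.sum_univ_two, E12m, E23m]
  fin_cases a <;> fin_cases f <;> norm_num <;>
    first
    | linear_combination (M b c * M d e) * h00
    | linear_combination (M b c * M d e) * h01
    | linear_combination (M b c * M d e) * h10
    | linear_combination (M b c * M d e) * h11

lemma l2' (M : Matrix (Fin 2) (Fin 2) ℂ)
    (h00 : M 0 0 * M 0 0 + M 0 1 * M 1 0 = 1) (h01 : M 0 0 * M 0 1 + M 0 1 * M 1 1 = 0)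
    (h10 : M 1 0 * M 0 0 + M 1 1 * M 1 0 = 0) (h11 : M 1 0 * M 0 1 + M 1 1 * M 1 1 = 1) :
    E23m M * E12m M * E23m M = E23m M := by
  rw [l1' M h00 h01 h10 h11]
  ext ⟨a, b, c⟩ ⟨d, e, f⟩
  simp only [mul_apply, Fintype.sum_prod_type, Fin.sum_univ_two, E23m]
  fin_cases a <;> fin_cases d <;> norm_num <;>
    first
    | linear_combination (M b c * M e f) * h00
    | linear_combination (M b c * M e f) * h01
    | linear_combination (M b c * M e f) * h10
    | linear_combination (M b c * M e f) * h11

lemma sq12 (M : Matrix (Fin 2) (Fin 2) ℂ) (S : ℂ)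
    (hS : M 0 0 ^ 2 + M 0 1 ^ 2 + M 1 0 ^ 2 + M 1 1 ^ 2 = S) :
    E12m M * E12m M = S • E12m M := by
  ext ⟨a, b, c⟩ ⟨d, e, f⟩
  simp only [mul_apply, Fintype.sum_prod_type, Fin.sum_univ_two, E12m, Matrix.smul_apply, smul_eq_mul]
  fin_cases c <;> fin_cases f <;> norm_num <;>
    linear_combination (M a b * M d e) * hS

lemma sq23 (M : Matrix (Fin 2) (Fin 2) ℂ) (S : ℂ)
    (hS : M 0 0 ^ 2 + M 0 1 ^ 2 + M 1 0 ^ 2 + M 1 1 ^ 2 = S) :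
    E23m M * E23m M = S • E23m M := by
  ext ⟨a, b, c⟩ ⟨d, e, f⟩
  simp only [mul_apply, Fintype.sum_prod_type, Fin.sum_univ_two, E23m, Matrix.smul_apply, smul_eq_mul]
  fin_cases a <;> fin_cases d <;> norm_num <;>
    linear_combination (M b c * M e f) * hS

lemma sqE (M : Matrix (Fin 2) (Fin 2) ℂ) (S : ℂ)
    (hS : M 0 0 ^ 2 + M 0 1 ^ 2 + M 1 0 ^ 2 + M 1 1 ^ 2 = S) :
    Em M * Em M = S • Em M := by
  ext ⟨a, b⟩ ⟨c, d⟩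
  simp only [mul_apply, Fintype.sum_prod_type, Fin.sum_univ_two, Em, Matrix.smul_apply, smul_eq_mul]
  linear_combination (M a b * M c d) * hS

/-- The bracket R-matrix R^{ab}_{cd} = A·M^{ab}M_{cd} + A⁻¹·δ^a_c δ^b_d with
M = [[0, iA],[−iA⁻¹, 0]] satisfies the Yang-Baxter equation, and the
contraction of R with R̄ (where R̄ swaps A and A⁻¹) is the identity. -/
theorem bracket_R_yang_baxter_and_inverse (A : ℂ) (hA : A ≠ 0)
    (M : Matrix (Fin 2) (Fin 2) ℂ)
    (hM : M = !![0, Complex.I * A; -Complex.I * A⁻¹, 0])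
    (R Rb : Matrix (Fin 2 × Fin 2) (Fin 2 × Fin 2) ℂ)
    (hR : ∀ p q, R p q =
      A * M p.1 p.2 * M q.1 q.2 +
        A⁻¹ * (if p.1 = q.1 then 1 else 0) * (if p.2 = q.2 then 1 else 0))
    (hRb : ∀ p q, Rb p q =
      A⁻¹ * M p.1 p.2 * M q.1 q.2 +
        A * (if p.1 = q.1 then 1 else 0) * (if p.2 = q.2 then 1 else 0))
    (R12 R23 : Matrix (Fin 2 × Fin 2 × Fin 2) (Fin 2 × Fin 2 × Fin 2) ℂ)
    (hR12 : ∀ p q, R12 p q = R (p.1, p.2.1) (q.1, q.2.1) * (if p.2.2 = q.2.2 then 1 else 0))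
    (hR23 : ∀ p q, R23 p q = (if p.1 = q.1 then 1 else 0) * R p.2 q.2) :
    R12 * R23 * R12 = R23 * R12 * R23 ∧ Rb * R = 1 ∧ R * Rb = 1 := by
  -- entry identities for M
  have h00 : M 0 0 * M 0 0 + M 0 1 * M 1 0 = 1 := by
    rw [hM]; norm_num; field_simp; linear_combination -Complex.I_sq
  have h01 : M 0 0 * M 0 1 + M 0 1 * M 1 1 = 0 := by rw [hM]; norm_num
  have h10 : M 1 0 * M 0 0 + M 1 1 * M 1 0 = 0 := by rw [hM]; norm_num
  have h11 : M 1 0 * M 0 1 + M 1 1 * M 1 1 = 1 := by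
    rw [hM]; norm_num; field_simp; linear_combination -Complex.I_sq
  have hS : M 0 0 ^ 2 + M 0 1 ^ 2 + M 1 0 ^ 2 + M 1 1 ^ 2 = -(A ^ 2) - (A⁻¹) ^ 2 := by
    rw [hM]; norm_num; ring_nf; simp [Complex.I_sq]; ring
  set S : ℂ := -(A ^ 2) - (A⁻¹) ^ 2 with hSdef
  have hAA : A * A⁻¹ = 1 := mul_inv_cancel₀ hA
  -- decompositions
  have hRE : R = A • Em M + A⁻¹ • 1 := by
    ext ⟨a, b⟩ ⟨c, d⟩
    simp only [hR, Em, Matrix.add_apply, Matrix.smul_apply, one_apply, Prod.ext_iff, smul_eq_mul]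
    split_ifs <;> first | ring1 | tauto
  have hRbE : Rb = A⁻¹ • Em M + A • 1 := by
    ext ⟨a, b⟩ ⟨c, d⟩
    simp only [hRb, Em, Matrix.add_apply, Matrix.smul_apply, one_apply, Prod.ext_iff, smul_eq_mul]
    split_ifs <;> first | ring1 | tauto
  have hR12E : R12 = A • E12m M + A⁻¹ • 1 := by
    ext ⟨a, b, c⟩ ⟨d, e, f⟩
    simp only [hR12, hR, E12m, Matrix.add_apply, Matrix.smul_apply, one_apply, Prod.ext_iff, smul_eq_mul]
    split_ifs <;> first | ring1 | tauto
  have hR23E : R23 = A • E23m M + A⁻¹ • 1 := by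
    ext ⟨a, b, c⟩ ⟨d, e, f⟩
    simp only [hR23, hR, E23m, Matrix.add_apply, Matrix.smul_apply, one_apply, Prod.ext_iff, smul_eq_mul]
    split_ifs <;> first | ring1 | tauto
  refine ⟨?_, ?_, ?_⟩
  · rw [hR12E, hR23E]
    simp only [add_mul, mul_add, smul_mul_assoc, mul_smul_comm, one_mul, mul_one, smul_smul]
    rw [l2 M h00 h01 h10 h11, l2' M h00 h01 h10 h11, sq12 M S hS, sq23 M S hS,
      l1 M h00 h01 h10 h11, l1' M h00 h01 h10 h11]
    match_scalars <;> field_simp <;>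
      first
        | linear_combination (-(A ^ 3 * A⁻¹) - A ^ 2) * hAA
        | (left; linear_combination (-(A ^ 3 * A⁻¹) - A ^ 2) * hAA)
        | linear_combination (-(A * A⁻¹) - 1) * hAA
        | linear_combination (A * A⁻¹ + 1) * hAA
  · rw [hRE, hRbE]
    simp only [add_mul, mul_add, smul_mul_assoc, mul_smul_comm, one_mul, mul_one, smul_smul]
    rw [sqE M S hS]
    match_scalars <;> field_simp <;>
      first
        | linear_combination (-(A ^ 3 * A⁻¹) - A ^ 2) * hAA
        | (left; linear_combination (-(A ^ 3 * A⁻¹) - A ^ 2) * hAA)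
        | linear_combination (-(A * A⁻¹) - 1) * hAA
  · rw [hRE, hRbE]
    simp only [add_mul, mul_add, smul_mul_assoc, mul_smul_comm, one_mul, mul_one, smul_smul]
    rw [sqE M S hS]
    match_scalars <;> field_simp <;>
      first
        | linear_combination (-(A ^ 3 * A⁻¹) - A ^ 2) * hAA
        | (left; linear_combination (-(A ^ 3 * A⁻¹) - A ^ 2) * hAA)
        | linear_combination (-(A * A⁻¹) - 1) * hAA
end
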